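/- Let m ≥ 2, let s_1,…,s_m be nonnegative integers with total t = s_1+⋯+s_m, and let l_j, u_j be integers with 0 ≤ l_j ≤ u_j ≤ s_j and l_j + u_j = s_j for each j (symmetric core constraints). For a nonnegative integer n let N(n) = ∑ ∏_{j=1}^m C(s_j, x_j), the sum over all x ∈ ℕ^m with x_1+⋯+x_m = n and l_j ≤ x_j ≤ u_j for all j. Then for every n with 2n ≥ t and n < t, one has N(n)·(t − n) ≥ N(n+1)·(n + 1). Equivalently, if W = W_1 + ⋯ + W_m is the sum of independent random variables W_j distributed as Bin(s_j, 1/2) truncated to {l_j,…,u_j}, then P[W = n]/P[W = n+1] ≥ (n+1)/(t−n) = P[Y = n]/P[Y = n+1] where Y ~ Bin(t, 1/2). -/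

import Mathlib

namespace TruncatedBinomialRatio
open Polynomial Finset

set_option linter.unusedSectionVars false
set_option linter.unusedVariables false

variable {ι : Type*} [DecidableEq ι]

open Polynomial Finset

/-- weighted truncated polynomial -/
noncomputable def wpoly (l u : ℕ) (w : ℕ → ℕ) : ℕ[X] := ∑ x ∈ Icc l u, C (w x) * X ^ x

lemma coeff_wpoly (l u : ℕ) (w : ℕ → ℕ) (i : ℕ) :
    (wpoly l u w).coeff i = if i ∈ Icc l u then w i else 0 := by
  rw [wpoly, finset_sum_coeff]
  simp only [coeff_C_mul_X_pow]
  rw [Finset.sum_ite_eq (Icc l u) i w]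

lemma natDegree_wpoly_le (l u : ℕ) (w : ℕ → ℕ) : (wpoly l u w).natDegree ≤ u := by
  apply Polynomial.natDegree_sum_le_of_forall_le
  intro i hi
  exact le_trans (natDegree_C_mul_X_pow_le _ _) (mem_Icc.mp hi).2

lemma coeff_X_mul_derivative (p : ℕ[X]) (i : ℕ) :
    (X * derivative p).coeff i = i * p.coeff i := by
  cases i with
  | zero => simp
  | succ i => rw [coeff_X_mul, coeff_derivative]; simp [Nat.cast_id]; ring

lemma X_mul_derivative_wpoly (l u : ℕ) (w : ℕ → ℕ) :
    X * derivative (wpoly l u w) = wpoly l u (fun x => x * w x) := by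
  ext i
  rw [coeff_X_mul_derivative, coeff_wpoly, coeff_wpoly]
  split <;> simp

lemma wpoly_id (s l u : ℕ) (w : ℕ → ℕ) (h : u ≤ s) :
    wpoly l u (fun x => x * w x) + wpoly l u (fun x => (s - x) * w x)
      = C s * wpoly l u w := by
  ext i
  rw [coeff_add, coeff_C_mul, coeff_wpoly, coeff_wpoly, coeff_wpoly]
  split
  next hi =>
    rw [← add_mul]
    have h2 := (mem_Icc.mp hi).2
    congr 1
    omega
  next => simp

lemma reflect_wpoly_choose (s l u : ℕ) (hsym : l + u = s) (hus : u ≤ s) :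
    reflect s (wpoly l u (Nat.choose s)) = wpoly l u (Nat.choose s) := by
  ext i
  rw [coeff_reflect, coeff_wpoly, coeff_wpoly]
  rcases le_or_gt i s with h | h
  · rw [revAt_le h]
    by_cases hi : i ∈ Icc l u
    · rw [if_pos, if_pos hi]
      · rw [mem_Icc] at hi
        rw [← Nat.choose_symm (hi.2.trans hus)]
      · rw [mem_Icc] at hi ⊢; omega
    · rw [if_neg, if_neg hi]
      rw [mem_Icc] at hi ⊢; omega
  · rw [revAt_eq_self_of_lt h]


open Polynomial Finset


lemma derivative_finset_prod (A : Finset ι) (f : ι → ℕ[X]) :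
    derivative (∏ j ∈ A, f j) = ∑ j ∈ A, derivative (f j) * ∏ k ∈ A.erase j, f k := by
  induction A using Finset.induction_on with
  | empty => simp
  | insert _ _ ha ih =>
    rename_i a A
    rw [Finset.prod_insert ha, derivative_mul, ih, Finset.sum_insert ha,
      Finset.erase_insert ha, Finset.mul_sum]
    congr 1
    apply Finset.sum_congr rfl
    intro j hj
    rw [Finset.erase_insert_of_ne (by rintro rfl; exact ha hj),
      Finset.prod_insert (fun h => ha (Finset.mem_of_mem_erase h))]
    ring

lemma mono_of_ratio (Q : ℕ[X]) (T : ℕ)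
    (hsymm : ∀ a b : ℕ, a + b = T → Q.coeff a = Q.coeff b)
    (hrat : ∀ q : ℕ, T ≤ 2 * q → Q.coeff (q + 1) * (q + 1) ≤ Q.coeff q * (T - q)) :
    ∀ a b : ℕ, T + 1 ≤ a + b → b ≤ a → Q.coeff a ≤ Q.coeff b := by
  have dec : ∀ q : ℕ, T ≤ 2 * q → Q.coeff (q + 1) ≤ Q.coeff q := by
    intro q hq
    have h1 := hrat q hq
    have h2 : Q.coeff q * (T - q) ≤ Q.coeff q * (q + 1) :=
      Nat.mul_le_mul_left _ (by omega)
    exact Nat.le_of_mul_le_mul_right (h1.trans h2) (Nat.succ_pos q)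
  have chain : ∀ b : ℕ, T ≤ 2 * b → ∀ a : ℕ, b ≤ a → Q.coeff a ≤ Q.coeff b := by
    intro b hb a ha
    induction a, ha using Nat.le_induction with
    | base => exact le_rfl
    | succ a ha ih => exact le_trans (dec a (by omega)) ih
  intro a b hab hba
  by_cases hb : T ≤ 2 * b
  · exact chain b hb a hba
  · have hbT : b ≤ T := by omega
    rw [← hsymm (T - b) b (by omega)]
    exact chain (T - b) (by omega) a (by omega)


open Polynomial Finset


lemma natDegree_prod_le' (A : Finset ι) (f : ι → ℕ[X]) (d : ι → ℕ)
    (hd : ∀ j ∈ A, (f j).natDegree ≤ d j) :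
    (∏ j ∈ A, f j).natDegree ≤ ∑ j ∈ A, d j :=
  le_trans (Polynomial.natDegree_prod_le A f) (Finset.sum_le_sum hd)

lemma vanish_prod (A : Finset ι) (f : ι → ℕ[X]) (d : ι → ℕ)
    (hd : ∀ j ∈ A, (f j).natDegree ≤ d j) {r : ℕ} (hr : (∑ j ∈ A, d j) < r) :
    (∏ j ∈ A, f j).coeff r = 0 :=
  Polynomial.coeff_eq_zero_of_natDegree_lt (lt_of_le_of_lt (natDegree_prod_le' A f d hd) hr)

lemma reflect_prod (A : Finset ι) (f : ι → ℕ[X]) (d : ι → ℕ)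
    (hd : ∀ j ∈ A, (f j).natDegree ≤ d j)
    (hr : ∀ j ∈ A, reflect (d j) (f j) = f j) :
    reflect (∑ j ∈ A, d j) (∏ j ∈ A, f j) = ∏ j ∈ A, f j := by
  induction A using Finset.induction_on with
  | empty => simp [reflect_one]
  | insert _ _ ha ih =>
    rename_i a A
    rw [Finset.prod_insert ha, Finset.sum_insert ha,
      Polynomial.reflect_mul (f a) _ (hd a (Finset.mem_insert_self a A))
        (natDegree_prod_le' A f d (fun j hj => hd j (Finset.mem_insert_of_mem hj))),
      hr a (Finset.mem_insert_self a A),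
      ih (fun j hj => hd j (Finset.mem_insert_of_mem hj))
        (fun j hj => hr j (Finset.mem_insert_of_mem hj))]

lemma symm_coeff_of_reflect (Q : ℕ[X]) (T : ℕ) (hQ : reflect T Q = Q) :
    ∀ a b : ℕ, a + b = T → Q.coeff a = Q.coeff b := by
  intro a b hab
  conv_lhs => rw [← hQ]
  rw [coeff_reflect, revAt_le (by omega)]
  congr 1
  omega


open Polynomial Finset

lemma antidiag_swap_bound (n a b : ℕ) (f g r : ℕ → ℕ)
    (hab : a ≠ b)
    (hfa : ∀ i, i ≠ a → i ≠ b → f i = g i)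
    (hfb : f b = 0)
    (hbd : (if a ≤ n then f a * r (n - a) else 0) ≤ (if b ≤ n then g b * r (n - b) else 0)) :
    ∑ p ∈ Finset.HasAntidiagonal.antidiagonal n, f p.1 * r p.2
      ≤ ∑ p ∈ Finset.HasAntidiagonal.antidiagonal n, g p.1 * r p.2 := by
  rw [Finset.Nat.sum_antidiagonal_eq_sum_range_succ_mk, Finset.Nat.sum_antidiagonal_eq_sum_range_succ_mk]
  have key : ∀ k ∈ Finset.range (n+1), f k * r (n-k)
      = (if k = a then 0 else f k * r (n-k)) + (if k = a then f k * r (n-k) else 0) := by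
    intro k _; split <;> simp
  have key2 : ∀ k ∈ Finset.range (n+1), g k * r (n-k)
      = (if k = b then 0 else g k * r (n-k)) + (if k = b then g k * r (n-k) else 0) := by
    intro k _; split <;> simp
  rw [Finset.sum_congr rfl key, Finset.sum_add_distrib,
    Finset.sum_congr rfl key2, Finset.sum_add_distrib]
  apply add_le_add
  · apply Finset.sum_le_sum
    intro k _
    by_cases h1 : k = a
    · simp [h1]
    · rw [if_neg h1]
      by_cases h2 : k = b
      · subst h2; rw [hfb, if_pos rfl]; simp
      · rw [hfa k h1 h2, if_neg h2]
  · rw [Finset.sum_ite_eq' (Finset.range (n+1)) a, Finset.sum_ite_eq' (Finset.range (n+1)) b]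
    simpa [Finset.mem_range, Nat.lt_succ_iff] using hbd

lemma claim_core (S L U T' : ℕ) (R : ℕ[X]) (n : ℕ)
    (hLU : L ≤ U) (hUS : U ≤ S) (hsy : L + U = S)
    (hn : S + T' ≤ 2 * n)
    (hvan : ∀ r : ℕ, T' < r → R.coeff r = 0)
    (hmono : ∀ a b : ℕ, T' + 1 ≤ a + b → b ≤ a → R.coeff a ≤ R.coeff b) :
    ((wpoly L U (fun x => x * S.choose x)) * R).coeff (n+1)
      ≤ ((wpoly L U (fun x => (S - x) * S.choose x)) * R).coeff n := by
  rw [coeff_mul, coeff_mul, Finset.Nat.sum_antidiagonal_succ]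
  simp only [coeff_wpoly]
  have h0 : (if (0:ℕ) ∈ Icc L U then 0 * S.choose 0 else 0) * R.coeff (n+1) = 0 := by
    split <;> simp
  rw [h0, zero_add]
  have hw1 : ∀ i : ℕ, (i+1) * S.choose (i+1) = S.choose i * (S - i) := fun i => by
    rw [mul_comm, Nat.choose_succ_right_eq]
  have hw2 : ∀ i : ℕ, (S - i) * S.choose i = S.choose i * (S - i) := fun i => mul_comm _ _
  simp only [hw1, hw2]
  rcases Nat.eq_zero_or_pos L with hL0 | hLpos
  · subst hL0
    apply Finset.sum_le_sum
    intro p _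
    by_cases h : p.1 + 1 ∈ Icc 0 U
    · rw [if_pos h, if_pos (by rw [mem_Icc] at h ⊢; omega)]
    · rw [if_neg h]
      simp
  · obtain ⟨L', rfl⟩ : ∃ L', L = L' + 1 := ⟨L - 1, by omega⟩
    have hK : S.choose L' * (S - L') = S.choose U * (S - U) := by
      rw [← hw1 L']
      have h2 : S.choose (L' + 1) = S.choose U := by
        rw [← Nat.choose_symm hUS]
        congr 1
        omega
      rw [h2, mul_comm]
      congr 1
      omega
    apply antidiag_swap_bound n L' U
      (fun i => if i + 1 ∈ Icc (L'+1) U then S.choose i * (S - i) else 0)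
      (fun i => if i ∈ Icc (L'+1) U then S.choose i * (S - i) else 0)
      R.coeff
    · omega
    · intro i h1 h2
      have : (i + 1 ∈ Icc (L'+1) U) ↔ (i ∈ Icc (L'+1) U) := by
        rw [mem_Icc, mem_Icc]; omega
      rw [if_congr this rfl rfl]
    · rw [if_neg (by rw [mem_Icc]; omega)]
    · have hfa : (if L' + 1 ∈ Icc (L'+1) U then S.choose L' * (S - L') else 0)
          = S.choose L' * (S - L') := by rw [if_pos (by rw [mem_Icc]; omega)]
      have hgb : (if U ∈ Icc (L'+1) U then S.choose U * (S - U) else 0)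
          = S.choose U * (S - U) := by rw [if_pos (by rw [mem_Icc]; omega)]
      rw [hfa, hgb]
      by_cases hU : U ≤ n
      · rw [if_pos (by omega : L' ≤ n), if_pos hU, hK]
        exact Nat.mul_le_mul_left _ (hmono (n - L') (n - U) (by omega) (by omega))
      · rw [if_neg hU]
        by_cases hL : L' ≤ n
        · rw [if_pos hL]
          have : R.coeff (n - L') = 0 := hvan _ (by omega)
          simp [this]
        · rw [if_neg hL]


open Polynomial Finset

theorem ratio_main (s l u : ι → ℕ) : ∀ A : Finset ι,
    (∀ j ∈ A, l j ≤ u j) → (∀ j ∈ A, u j ≤ s j) → (∀ j ∈ A, l j + u j = s j) →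
    ∀ n : ℕ, (∑ j ∈ A, s j) ≤ 2 * n →
      (∏ j ∈ A, wpoly (l j) (u j) (Nat.choose (s j))).coeff (n+1) * (n+1)
        ≤ (∏ j ∈ A, wpoly (l j) (u j) (Nat.choose (s j))).coeff n * ((∑ j ∈ A, s j) - n) := by
  intro A
  induction A using Finset.strongInduction with
  | _ A ih =>
  intro hlu hus hsy n hn
  set pb : ι → ℕ[X] := fun j => wpoly (l j) (u j) (Nat.choose (s j)) with hpbdef
  have hdeg : ∀ B : Finset ι, B ⊆ A → ∀ j ∈ B, (pb j).natDegree ≤ s j :=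
    fun B hB j hj => (natDegree_wpoly_le _ _ _).trans (hus j (hB hj))
  have hrefl : ∀ B : Finset ι, B ⊆ A → ∀ j ∈ B, reflect (s j) (pb j) = pb j :=
    fun B hB j hj => reflect_wpoly_choose (s j) (l j) (u j) (hsy j (hB hj)) (hus j (hB hj))
  -- per-coordinate claim
  have claim : ∀ j ∈ A,
      ((wpoly (l j) (u j) (fun x => x * (s j).choose x)) * ∏ k ∈ A.erase j, pb k).coeff (n+1)
        ≤ ((wpoly (l j) (u j) (fun x => (s j - x) * (s j).choose x)) * ∏ k ∈ A.erase j, pb k).coeff n := by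
    intro j hj
    have hBsub : A.erase j ⊆ A := Finset.erase_subset j A
    have hT : s j + ∑ k ∈ A.erase j, s k = ∑ k ∈ A, s k := Finset.add_sum_erase A s hj
    apply claim_core (s j) (l j) (u j) (∑ k ∈ A.erase j, s k) _ n
      (hlu j hj) (hus j hj) (hsy j hj) (by omega)
    · intro r hr
      exact vanish_prod _ pb s (hdeg _ hBsub) hr
    · apply mono_of_ratio _ _
      · exact symm_coeff_of_reflect _ _ (reflect_prod _ pb s (hdeg _ hBsub) (hrefl _ hBsub))
      · intro q hq
        exact ih (A.erase j) (Finset.erase_ssubset hj)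
          (fun k hk => hlu k (hBsub hk)) (fun k hk => hus k (hBsub hk))
          (fun k hk => hsy k (hBsub hk)) q hq
  -- global identities
  set Q : ℕ[X] := ∏ j ∈ A, pb j with hQdef
  set T : ℕ := ∑ j ∈ A, s j with hTdef
  have hXD : X * derivative Q = ∑ j ∈ A, (wpoly (l j) (u j) (fun x => x * (s j).choose x)) * ∏ k ∈ A.erase j, pb k := by
    rw [hQdef, derivative_finset_prod, Finset.mul_sum]
    apply Finset.sum_congr rfl
    intro j hj
    rw [← mul_assoc, X_mul_derivative_wpoly]
  have hID : (∑ j ∈ A, (wpoly (l j) (u j) (fun x => (s j - x) * (s j).choose x)) * ∏ k ∈ A.erase j, pb k)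
      + X * derivative Q = C T * Q := by
    rw [hXD, ← Finset.sum_add_distrib]
    have step : ∀ j ∈ A,
        (wpoly (l j) (u j) (fun x => (s j - x) * (s j).choose x)) * (∏ k ∈ A.erase j, pb k)
          + (wpoly (l j) (u j) (fun x => x * (s j).choose x)) * (∏ k ∈ A.erase j, pb k)
        = C (s j) * Q := by
      intro j hj
      rw [← add_mul, add_comm, wpoly_id _ _ _ _ (hus j hj), mul_assoc, hQdef]
      congr 1
      exact Finset.mul_prod_erase A pb hj
    rw [Finset.sum_congr rfl step, ← Finset.sum_mul, hTdef]
    congr 1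
    exact (map_sum C s A).symm
  have hE : (∑ j ∈ A, ((wpoly (l j) (u j) (fun x => (s j - x) * (s j).choose x)) * ∏ k ∈ A.erase j, pb k).coeff n)
      + n * Q.coeff n = T * Q.coeff n := by
    have := congrArg (fun p : ℕ[X] => p.coeff n) hID
    simp only [coeff_add, coeff_X_mul_derivative, coeff_C_mul] at this
    rw [finset_sum_coeff] at this
    exact this
  have hL : Q.coeff (n+1) * (n+1)
      = ∑ j ∈ A, ((wpoly (l j) (u j) (fun x => x * (s j).choose x)) * ∏ k ∈ A.erase j, pb k).coeff (n+1) := by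
    rw [← finset_sum_coeff, ← hXD, coeff_X_mul_derivative, mul_comm]
  have hsum := Finset.sum_le_sum claim
  -- conclude
  have hvanA : T < n → Q.coeff n = 0 := fun h => vanish_prod A pb s (hdeg A (le_refl A)) h
  rcases le_or_gt n T with hcase | hcase
  · have harith : Q.coeff n * (T - n) = T * Q.coeff n - n * Q.coeff n := by
      rw [mul_comm, Nat.sub_mul]
    rw [hL, harith]
    exact hsum.trans (le_of_eq (Nat.eq_sub_of_add_eq hE))
  · have hq0 := hvanA hcase
    rw [hq0] at hE
    rw [hL, hq0, zero_mul]
    have h0 : (∑ j ∈ A, ((wpoly (l j) (u j) fun x => (s j - x) * (s j).choose x) * ∏ k ∈ A.erase j, pb k).coeff n) = 0 := by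
      simpa using hE
    rw [← h0]
    exact hsum

open Polynomial Finset

lemma coeffN : ∀ (m : ℕ) (s l u : Fin m → ℕ) (r : ℕ),
    (∏ j, wpoly (l j) (u j) (Nat.choose (s j))).coeff r
      = ∑ x ∈ (Fintype.piFinset fun j => Finset.Icc (l j) (u j)).filter
          (fun x => ∑ j, x j = r), ∏ j, (s j).choose (x j)
  | 0, s, l, u, r => by
    simp only [Finset.univ_eq_empty, Finset.prod_empty, coeff_one]
    rcases Nat.eq_zero_or_pos r with rfl | hr
    · simp
    · rw [if_neg (by omega)]
      rw [eq_comm, Finset.sum_eq_zero_iff]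
      intro x hx
      rw [Finset.mem_filter] at hx
      simp only [Finset.univ_eq_empty, Finset.sum_empty] at hx
      omega
  | (m+1), s, l, u, r => by
    rw [Fin.prod_univ_succ, coeff_mul, Finset.Nat.sum_antidiagonal_eq_sum_range_succ_mk]
    simp only [coeff_wpoly, coeffN m (fun j => s j.succ) (fun j => l j.succ) (fun j => u j.succ)]
    -- RHS transformation
    have hmap : (Fintype.piFinset fun j : Fin (m+1) => Finset.Icc (l j) (u j))
        = ((Finset.Icc (l 0) (u 0)) ×ˢ Fintype.piFinset (fun j : Fin m => Finset.Icc (l j.succ) (u j.succ))).map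
            (Fin.consEquiv fun _ => ℕ).toEmbedding := by
      have := Finset.filter_piFinset_eq_map_consEquiv
        (fun j : Fin (m+1) => Finset.Icc (l j) (u j)) (fun _ => True)
      simp at this
      exact this
    rw [Finset.sum_filter, hmap, Finset.sum_map, Finset.sum_product]
    simp only [Equiv.coe_toEmbedding, Fin.consEquiv_apply, Fin.sum_univ_succ, Fin.prod_univ_succ,
      Fin.cons_zero, Fin.cons_succ]
    -- inner sums
    have hinner : ∀ a ∈ Finset.Icc (l 0) (u 0),
        (∑ y ∈ Fintype.piFinset (fun j : Fin m => Finset.Icc (l j.succ) (u j.succ)),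
          if a + ∑ j : Fin m, y j = r then (s 0).choose a * ∏ j : Fin m, (s j.succ).choose (y j) else 0)
        = if a ∈ Finset.range (r+1) then (s 0).choose a *
            ∑ y ∈ (Fintype.piFinset (fun j : Fin m => Finset.Icc (l j.succ) (u j.succ))).filter
              (fun y => ∑ j : Fin m, y j = r - a), ∏ j : Fin m, (s j.succ).choose (y j)
          else 0 := by
      intro a _
      by_cases har : a ≤ r
      · rw [if_pos (Finset.mem_range.mpr (by omega))]
        rw [Finset.mul_sum, ← Finset.sum_filter]
        apply Finset.sum_congr
        · apply Finset.filter_congr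
          intro y _
          constructor <;> intro h <;> omega
        · intro y _; rfl
      · rw [if_neg (by rw [Finset.mem_range]; omega)]
        apply Finset.sum_eq_zero
        intro y _
        rw [if_neg (by omega)]
    rw [Finset.sum_congr rfl hinner, Finset.sum_ite_mem]
    have hlhs : ∀ x ∈ Finset.range (r+1),
        (if x ∈ Finset.Icc (l 0) (u 0) then (s 0).choose x else 0) *
          (∑ y ∈ (Fintype.piFinset (fun j : Fin m => Finset.Icc (l j.succ) (u j.succ))).filter
            (fun y => ∑ j : Fin m, y j = r - x), ∏ j : Fin m, (s j.succ).choose (y j))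
        = if x ∈ Finset.Icc (l 0) (u 0) then (s 0).choose x *
            ∑ y ∈ (Fintype.piFinset (fun j : Fin m => Finset.Icc (l j.succ) (u j.succ))).filter
              (fun y => ∑ j : Fin m, y j = r - x), ∏ j : Fin m, (s j.succ).choose (y j)
          else 0 := by
      intro x _
      split <;> simp
    rw [Finset.sum_congr rfl hlhs, Finset.sum_ite_mem, Finset.inter_comm]

end TruncatedBinomialRatio

/-- Corollary to Theorem 1: the convolution `W` of symmetrically truncated
binomial `Bin(s_j, 1/2)` variables satisfies
`P[W = n]/P[W = n+1] ≥ (n+1)/(t-n)` for `⌈t/2⌉ ≤ n < t`, stated in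
cross-multiplied integer form `N(n)·(t-n) ≥ N(n+1)·(n+1)`. -/
theorem truncated_binomial_ratio (m : ℕ) (hm : 2 ≤ m) (s l u : Fin m → ℕ)
    (hlu : ∀ j, l j ≤ u j) (hus : ∀ j, u j ≤ s j)
    (hsym : ∀ j, l j + u j = s j)
    (t : ℕ) (ht : t = ∑ j, s j)
    (N : ℕ → ℕ)
    (hN : ∀ r, N r = ∑ x ∈ (Fintype.piFinset fun j => Finset.Icc (l j) (u j)).filter
        (fun x => ∑ j, x j = r), ∏ j, (s j).choose (x j))
    (n : ℕ) (h1 : t ≤ 2 * n) (h2 : n < t) :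
    N (n + 1) * (n + 1) ≤ N n * (t - n) := by
  rw [hN, hN, ← TruncatedBinomialRatio.coeffN m s l u,
    ← TruncatedBinomialRatio.coeffN m s l u]
  have := TruncatedBinomialRatio.ratio_main s l u Finset.univ
    (fun j _ => hlu j) (fun j _ => hus j) (fun j _ => hsym j) n (by rw [← ht]; exact h1)
  rw [← ht] at this
  exact this
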